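/- Let d ∈ (0, 1/2), let a < b be real numbers, set m = (a + b)/2, and let ν ∈ [a, m). Then ∫_m^b |λ − ν|^{−2d} dλ < ∫_a^m |λ − ν|^{−2d} dλ. -/

import Mathlib

set_option maxHeartbeats 1000000


open MeasureTheory intervalIntegral

section aux

variable {r : ℝ}

lemma aux_ii_nonneg (hr : -1 < r) (c : ℝ) (hc : 0 ≤ c) :
    IntervalIntegrable (fun u => |u| ^ r) volume 0 c := by
  refine (intervalIntegral.intervalIntegrable_rpow' hr (a := 0) (b := c)).congr ?_
  intro x hx
  rw [Set.uIoc_of_le hc] at hx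
  show x ^ r = |x| ^ r; rw [abs_of_pos hx.1]

lemma aux_int_nonneg (hr : -1 < r) (c : ℝ) (hc : 0 ≤ c) :
    ∫ u in (0:ℝ)..c, |u| ^ r = c ^ (r + 1) / (r + 1) := by
  have h1 : ∫ u in (0:ℝ)..c, |u| ^ r = ∫ u in (0:ℝ)..c, u ^ r := by
    refine intervalIntegral.integral_congr fun x hx => ?_
    rw [Set.uIcc_of_le hc] at hx
    rw [abs_of_nonneg hx.1]
  rw [h1, integral_rpow (Or.inl hr),
    Real.zero_rpow (by linarith), sub_zero]

lemma aux_ii_nonpos (hr : -1 < r) (c : ℝ) (hc : c ≤ 0) :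
    IntervalIntegrable (fun u => |u| ^ r) volume c 0 := by
  have h := aux_ii_nonneg hr (-c) (by linarith)
  have h2 : IntervalIntegrable (fun u => |(-u)| ^ r) volume (-0) (-(-c)) :=
    (IntervalIntegrable.iff_comp_neg (h := by simp)).mp h
  simp only [abs_neg, neg_zero, neg_neg] at h2
  exact h2.symm

lemma aux_int_nonpos (hr : -1 < r) (c : ℝ) (hc : c ≤ 0) :
    ∫ u in c..(0:ℝ), |u| ^ r = (-c) ^ (r + 1) / (r + 1) := by
  have h := intervalIntegral.integral_comp_neg (a := (0:ℝ)) (b := -c)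
    (f := fun u => |u| ^ r)
  simp only [abs_neg, neg_zero, neg_neg] at h
  rw [← h, aux_int_nonneg hr (-c) (by linarith)]

lemma aux_ii (hr : -1 < r) (α β : ℝ) (hα : α ≤ 0) (hβ : 0 ≤ β) :
    IntervalIntegrable (fun u => |u| ^ r) volume α β :=
  (aux_ii_nonpos hr α hα).trans (aux_ii_nonneg hr β hβ)

lemma aux_int (hr : -1 < r) (α β : ℝ) (hα : α ≤ 0) (hβ : 0 ≤ β) :
    ∫ u in α..β, |u| ^ r = ((-α) ^ (r + 1) + β ^ (r + 1)) / (r + 1) := by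
  rw [← intervalIntegral.integral_add_adjacent_intervals
    (aux_ii_nonpos hr α hα) (aux_ii_nonneg hr β hβ),
    aux_int_nonpos hr α hα, aux_int_nonneg hr β hβ, ← add_div]

lemma aux_subadd {p : ℝ} (hp : 0 ≤ p) (hp1 : p ≤ 1) {x y : ℝ} (hx : 0 ≤ x) (hy : 0 ≤ y) :
    (x + y) ^ p ≤ x ^ p + y ^ p := by
  have := NNReal.rpow_add_le_add_rpow (⟨x, hx⟩ : NNReal) (⟨y, hy⟩ : NNReal) hp hp1
  have h2 := NNReal.coe_le_coe.mpr this
  push_cast [NNReal.coe_rpow] at h2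
  exact h2

end aux

/-- when the singularity ν lies strictly inside the left child interval,
the band-pass "variance" of the right child is strictly smaller. -/
theorem stmt_11 (d : ℝ) (hd : d ∈ Set.Ioo (0 : ℝ) (1 / 2)) (a b : ℝ) (hab : a < b)
    (m : ℝ) (hm : m = (a + b) / 2) (ν : ℝ) (hν : ν ∈ Set.Ico a m) :
    ∫ x in m..b, |x - ν| ^ (-(2 * d)) < ∫ x in a..m, |x - ν| ^ (-(2 * d)) := by
  obtain ⟨hd0, hd2⟩ := hd
  obtain ⟨hνa, hνm⟩ := hν
  set r : ℝ := -(2 * d) with hr_def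
  have hr : -1 < r := by rw [hr_def]; linarith
  have hr0 : r < 0 := by rw [hr_def]; linarith
  set p : ℝ := r + 1 with hp_def
  have hp0 : 0 < p := by linarith
  have hp1 : p < 1 := by linarith
  set s : ℝ := ν - a with hs_def
  set t : ℝ := m - ν with ht_def
  have hs : 0 ≤ s := by rw [hs_def]; linarith
  have ht : 0 < t := by rw [ht_def]; linarith
  have hbν : b - ν = s + 2 * t := by
    simp only [hs_def, ht_def, hm]; ring
  -- change of variables
  have hL : ∫ x in m..b, |x - ν| ^ r = ∫ u in t..(s + 2*t), |u| ^ r := by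
    have := intervalIntegral.integral_comp_sub_right (a := m) (b := b)
      (f := fun u => |u| ^ r) ν
    rw [this, ← ht_def, hbν]
  have hR : ∫ x in a..m, |x - ν| ^ r = ∫ u in (-s)..t, |u| ^ r := by
    have := intervalIntegral.integral_comp_sub_right (a := a) (b := m)
      (f := fun u => |u| ^ r) ν
    rw [this, ← ht_def]
    congr 1
    rw [hs_def]; ring
  -- compute both sides
  have hRval : ∫ u in (-s)..t, |u| ^ r = (s ^ p + t ^ p) / p := by
    rw [aux_int hr (-s) t (by linarith) ht.le, neg_neg]
  have hLval : ∫ u in t..(s + 2*t), |u| ^ r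
      = ((s + 2*t) ^ p - t ^ p) / p := by
    have h1 := aux_int hr 0 (s + 2*t) le_rfl (by linarith)
    have h2 := aux_int hr 0 t le_rfl ht.le
    simp only [neg_zero, ← hp_def, Real.zero_rpow (ne_of_gt hp0), zero_add] at h1 h2
    have hii1 := aux_ii hr 0 t le_rfl ht.le
    have hii2 : IntervalIntegrable (fun u => |u| ^ r) volume t (s + 2*t) :=
      hii1.symm.trans (aux_ii hr 0 (s + 2*t) le_rfl (by linarith))
    have hsplit := intervalIntegral.integral_add_adjacent_intervals hii1 hii2
    have heq : ∫ u in t..(s + 2*t), |u| ^ r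
        = (∫ u in (0:ℝ)..(s + 2*t), |u| ^ r) - ∫ u in (0:ℝ)..t, |u| ^ r := by
      rw [← hsplit]; ring
    rw [heq, h1, h2, div_sub_div_same]
  -- key inequality
  have hkey : (s + 2*t) ^ p < s ^ p + 2 * t ^ p := by
    have h1 : (s + 2*t) ^ p ≤ s ^ p + (2*t) ^ p :=
      aux_subadd hp0.le hp1.le hs (by linarith)
    have h2 : (2*t) ^ p = 2 ^ p * t ^ p := Real.mul_rpow (by norm_num) ht.le
    have h3 : (2:ℝ) ^ p < 2 ^ (1:ℝ) :=
      Real.rpow_lt_rpow_left_iff (by norm_num) |>.mpr hp1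
    have h4 : (0:ℝ) < t ^ p := Real.rpow_pos_of_pos ht p
    rw [Real.rpow_one] at h3
    nlinarith
  rw [hL, hR, hRval, hLval, div_lt_div_iff_of_pos_right hp0]
  linarith
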